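/- arXiv:2307.03746 — 2 statements merged into one kernel-verified Lean document; each statement's English description precedes it below -/
import Mathlib

section
/- Let α ∈ (1/2,1) and m = α/(1-α). The series η(α) := (1/(m+1)) Σ_{n≥0} (m-1)/(m^{n+1}-1) tends to +∞ as α → (1/2)^+, and consequently p_c(α) = η/(1+η) → 1 as α → (1/2)^+. -/
open Filter

private lemma term_eq {m : ℝ} (hm : 1 < m) (n : ℕ) :
    (m - 1) / (m ^ (n + 1) - 1) = (∑ i ∈ Finset.range (n + 1), m ^ i)⁻¹ := by
  rw [← geom_sum_mul m (n + 1), mul_comm]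
  exact div_mul_cancel_left₀ (by linarith) _

private lemma sum_pos' {m : ℝ} (hm : 1 < m) (n : ℕ) :
    0 < ∑ i ∈ Finset.range (n + 1), m ^ i :=
  Finset.sum_pos (fun i _ => pow_pos (by linarith) i) ⟨0, Finset.mem_range.mpr n.succ_pos⟩

private lemma F_tendsto :
    Tendsto (fun m : ℝ => (1 / (m + 1)) * ∑' n : ℕ, (m - 1) / (m ^ (n + 1) - 1))
      (nhdsWithin 1 (Set.Ioi 1)) atTop := by
  rw [tendsto_atTop]
  intro b
  obtain ⟨N, hN⟩ := (Real.tendsto_sum_range_one_div_nat_succ_atTop.eventually_ge_atTop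
    (6 * b)).exists
  have hpow : ∀ᶠ m : ℝ in nhds 1, m ^ N < 2 := by
    have hc : ContinuousAt (fun m : ℝ => m ^ N) 1 := (continuous_pow N).continuousAt
    have h2 : Set.Iio (2 : ℝ) ∈ nhds ((1 : ℝ) ^ N) := by
      rw [one_pow]; exact Iio_mem_nhds one_lt_two
    exact hc h2
  have hlt2 : ∀ᶠ m : ℝ in nhds (1 : ℝ), m < 2 := Iio_mem_nhds one_lt_two
  filter_upwards [self_mem_nhdsWithin, nhdsWithin_le_nhds hpow, nhdsWithin_le_nhds hlt2]
    with m hm1 hmN hm2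
  have hm1 : (1 : ℝ) < m := hm1
  have hmpos : (0 : ℝ) < m := by linarith
  set S : ℕ → ℝ := fun n => ∑ i ∈ Finset.range (n + 1), m ^ i with hS
  have hSpos : ∀ n, 0 < S n := fun n => sum_pos' hm1 n
  have hterm : ∀ n, (m - 1) / (m ^ (n + 1) - 1) = (S n)⁻¹ := fun n => term_eq hm1 n
  have htnonneg : ∀ n, 0 ≤ (m - 1) / (m ^ (n + 1) - 1) := fun n => by
    rw [hterm n]; exact (inv_pos.mpr (hSpos n)).le
  -- summability
  have hSgeom : ∀ n, m ^ n ≤ S n := fun n => by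
    exact Finset.single_le_sum (f := fun i => m ^ i)
      (fun i _ => (pow_pos hmpos i).le) (Finset.mem_range.mpr (Nat.lt_succ_self n))
  have hsum : Summable fun n : ℕ => (m - 1) / (m ^ (n + 1) - 1) := by
    apply Summable.of_nonneg_of_le htnonneg (g := fun n => (m - 1) / (m ^ (n + 1) - 1))
      (f := fun n => (1 / m) ^ n)
    · intro n
      rw [hterm n, div_pow, one_pow, ← one_div]
      rw [div_le_div_iff₀ (hSpos n) (pow_pos hmpos n)]
      simpa using hSgeom n
    · exact summable_geometric_of_lt_one (by positivity) (by rw [div_lt_one hmpos]; exact hm1)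
  -- lower bound on partial terms
  have hlow : ∀ n < N, 1 / (2 * (n + 1 : ℝ)) ≤ (m - 1) / (m ^ (n + 1) - 1) := by
    intro n hn
    rw [hterm n, ← one_div]
    apply one_div_le_one_div_of_le (hSpos n)
    have hSle : S n ≤ (n + 1 : ℝ) * m ^ N := by
      calc S n ≤ ∑ _i ∈ Finset.range (n + 1), m ^ N := by
            apply Finset.sum_le_sum
            intro i hi
            exact pow_le_pow_right₀ hm1.le (by
              have := Finset.mem_range.mp hi; omega)
        _ = (n + 1 : ℝ) * m ^ N := by
            rw [Finset.sum_const, Finset.card_range]; push_cast; ring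
    have : (n + 1 : ℝ) * m ^ N ≤ (n + 1 : ℝ) * 2 := by
      apply mul_le_mul_of_nonneg_left hmN.le (by positivity)
    linarith
  have hpartial : 3 * b ≤ ∑ n ∈ Finset.range N, (m - 1) / (m ^ (n + 1) - 1) := by
    have h1 : ∑ n ∈ Finset.range N, 1 / (2 * (n + 1 : ℝ)) ≤
        ∑ n ∈ Finset.range N, (m - 1) / (m ^ (n + 1) - 1) :=
      Finset.sum_le_sum fun n hn => hlow n (Finset.mem_range.mp hn)
    have h2 : ∑ n ∈ Finset.range N, 1 / (2 * (n + 1 : ℝ)) =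
        (1 / 2) * ∑ n ∈ Finset.range N, 1 / (n + 1 : ℝ) := by
      rw [Finset.mul_sum]
      apply Finset.sum_congr rfl
      intro n _
      have hn0 : (n : ℝ) + 1 ≠ 0 := by positivity
      field_simp
    have h3 : (6 : ℝ) * b ≤ ∑ n ∈ Finset.range N, 1 / (n + 1 : ℝ) := hN
    nlinarith
  have hT : 3 * b ≤ ∑' n : ℕ, (m - 1) / (m ^ (n + 1) - 1) :=
    le_trans hpartial (Summable.sum_le_tsum _ (fun n _ => htnonneg n) hsum)
  have hT0 : 0 ≤ ∑' n : ℕ, (m - 1) / (m ^ (n + 1) - 1) := tsum_nonneg htnonneg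
  have hc : (1 / 3 : ℝ) ≤ 1 / (m + 1) := by
    apply one_div_le_one_div_of_le (by linarith)
    linarith
  nlinarith

/-- As `α → (1/2)^+`, the quantity `η(α) = (1/(m+1)) Σ_{n≥0} (m-1)/(m^(n+1)-1)` with
`m = α/(1-α)` tends to `+∞`, and consequently `p_c(α) = η/(1+η)` tends to `1`. -/
theorem critical_point_tendsto_one
    (η pc : ℝ → ℝ)
    (hη : ∀ α : ℝ, η α = (1 / (α / (1 - α) + 1)) *
      ∑' n : ℕ, (α / (1 - α) - 1) / ((α / (1 - α)) ^ (n + 1) - 1))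
    (hpc : ∀ α : ℝ, pc α = η α / (1 + η α)) :
    Tendsto η (nhdsWithin (1/2 : ℝ) (Set.Ioi (1/2 : ℝ))) atTop ∧
      Tendsto pc (nhdsWithin (1/2 : ℝ) (Set.Ioi (1/2 : ℝ))) (nhds 1) := by
  have hg : Tendsto (fun α : ℝ => α / (1 - α)) (nhdsWithin (1/2 : ℝ) (Set.Ioi (1/2 : ℝ)))
      (nhdsWithin 1 (Set.Ioi 1)) := by
    rw [tendsto_nhdsWithin_iff]
    constructor
    · have hc : ContinuousAt (fun α : ℝ => α / (1 - α)) (1/2) := by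
        apply ContinuousAt.div continuousAt_id (continuousAt_const.sub continuousAt_id)
        norm_num
      have h := hc.mono_left (nhdsWithin_le_nhds (s := Set.Ioi (1/2 : ℝ)))
      norm_num at h
      exact h
    · have h1 : ∀ᶠ α : ℝ in nhds (1/2 : ℝ), α < 1 := Iio_mem_nhds (by norm_num)
      filter_upwards [self_mem_nhdsWithin, nhdsWithin_le_nhds h1] with α hα1 hα2
      have hα1 : (1/2 : ℝ) < α := hα1
      have : (0 : ℝ) < 1 - α := by linarith
      exact Set.mem_Ioi.mpr ((one_lt_div this).mpr (by linarith))
  have hηt : Tendsto η (nhdsWithin (1/2 : ℝ) (Set.Ioi (1/2 : ℝ))) atTop := by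
    have : η = (fun m : ℝ => (1 / (m + 1)) * ∑' n : ℕ, (m - 1) / (m ^ (n + 1) - 1)) ∘
        (fun α : ℝ => α / (1 - α)) := funext fun α => hη α
    rw [this]
    exact F_tendsto.comp hg
  refine ⟨hηt, ?_⟩
  have hcomp : Tendsto (fun x : ℝ => x / (1 + x)) atTop (nhds 1) := by
    have h0 : Tendsto (fun x : ℝ => 1 + x) atTop atTop :=
      tendsto_atTop_add_const_left atTop 1 tendsto_id
    have h1 : Tendsto (fun x : ℝ => 1 - (1 + x)⁻¹) atTop (nhds (1 - 0)) :=
      tendsto_const_nhds.sub h0.inv_tendsto_atTop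
    rw [sub_zero] at h1
    apply h1.congr'
    filter_upwards [eventually_gt_atTop (0 : ℝ)] with x hx
    have : (1 + x) ≠ 0 := by linarith
    field_simp
    ring
  have : pc = (fun x : ℝ => x / (1 + x)) ∘ η := funext fun α => hpc α
  rw [this]
  exact hcomp.comp hηt
end

section
/- Let (S_n) be a random walk on ℤ started at 0 with i.i.d. increments X_i satisfying P(X_1 = 1) > 0, P(X_1 ≥ 2) = 0 (skip-free ascending), E|X_1| < ∞ and E[X_1] > 0. Let T' = inf{n ≥ 1 : S_n ≤ 0}. Then P(T' = ∞) = E[X_1]. -/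
open MeasureTheory ProbabilityTheory Filter Finset

lemma records_card_eq_sup (s : ℕ → ℤ) (h0 : s 0 = 0) (hstep : ∀ k, s (k+1) ≤ s k + 1)
    (N : ℕ) :
    (((Finset.Icc 1 N).filter (fun n => ∀ k, k < n → s k < s n)).card : ℤ)
      = (Finset.range (N+1)).sup' (by simp) s := by
  induction N with
  | zero =>
    have h : Finset.Icc 1 0 = (∅ : Finset ℕ) := by decide
    simp [h, h0]
  | succ N ih =>
    classical
    have hne : (Finset.range (N+1)).Nonempty := by simp
    have hins : Finset.Icc 1 (N+1) = insert (N+1) (Finset.Icc 1 N) := by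
      ext x; simp only [Finset.mem_Icc, Finset.mem_insert]; omega
    have hrange : Finset.range (N+2) = insert (N+1) (Finset.range (N+1)) :=
      Finset.range_add_one
    have hnotmem : (N+1) ∉ Finset.Icc 1 N := by simp
    have hsup_insert : (Finset.range (N+2)).sup' (by simp) s
        = s (N+1) ⊔ (Finset.range (N+1)).sup' hne s := by
      simp only [hrange]
      exact Finset.sup'_insert (H := hne) (f := s) (b := N+1)
    have hle : s (N+1) ≤ (Finset.range (N+1)).sup' hne s + 1 := by
      have h1 : s N ≤ (Finset.range (N+1)).sup' hne s :=
        Finset.le_sup' s (by simp)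
      have := hstep N
      omega
    by_cases hr : ∀ k, k < N+1 → s k < s (N+1)
    · have hlt : (Finset.range (N+1)).sup' hne s < s (N+1) := by
        rw [Finset.sup'_lt_iff]
        intro k hk
        exact hr k (Finset.mem_range.1 hk)
      have hcard : ((Finset.Icc 1 (N+1)).filter (fun n => ∀ k, k < n → s k < s n)).card
          = ((Finset.Icc 1 N).filter (fun n => ∀ k, k < n → s k < s n)).card + 1 := by
        rw [hins, Finset.filter_insert, if_pos hr,
          Finset.card_insert_of_notMem (fun h => hnotmem (Finset.mem_filter.1 h).1)]
      rw [hcard, hsup_insert]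
      push_cast
      rw [ih]
      omega
    · push_neg at hr
      obtain ⟨k, hk, hks⟩ := hr
      have hle2 : s (N+1) ≤ (Finset.range (N+1)).sup' hne s :=
        le_trans hks (Finset.le_sup' s (by simp [Finset.mem_range]; omega))
      have hcard : ((Finset.Icc 1 (N+1)).filter (fun n => ∀ k, k < n → s k < s n)).card
          = ((Finset.Icc 1 N).filter (fun n => ∀ k, k < n → s k < s n)).card := by
        rw [hins, Finset.filter_insert, if_neg (by push_neg; exact ⟨k, hk, hks⟩)]
      rw [hcard, hsup_insert, ih]
      omega

lemma tendsto_sup_div {s : ℕ → ℝ} {m : ℝ} (hm : 0 < m)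
    (hs : Tendsto (fun k : ℕ => s k / k) atTop (nhds m)) :
    Tendsto (fun N : ℕ => ((Finset.range (N+1)).sup' (by simp) s) / N) atTop (nhds m) := by
  rw [tendsto_order]
  constructor
  · intro b hb
    have h1 : ∀ᶠ k : ℕ in atTop, b < s k / k := hs.eventually (eventually_gt_nhds hb)
    filter_upwards [h1, eventually_ge_atTop 1] with N h1 h2
    have hN : (0:ℝ) < N := by exact_mod_cast h2
    calc b < s N / N := h1
      _ ≤ ((Finset.range (N+1)).sup' (by simp) s) / N := by
          gcongr
          exact Finset.le_sup' s (by simp)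
  · intro b hb
    set ε : ℝ := (b - m)/2 with hε
    have hεpos : 0 < ε := by simp [hε]; linarith
    have h1 : ∀ᶠ k : ℕ in atTop, s k / k < m + ε := hs.eventually (eventually_lt_nhds (by linarith))
    obtain ⟨K, hK⟩ := eventually_atTop.1 h1
    set C : ℝ := ((Finset.range (K+1)).sup' (by simp) s) ⊔ 0 with hC
    have hC0 : 0 ≤ C := le_sup_right
    have hbound : ∀ k : ℕ, s k ≤ (m + ε) * k + C := by
      intro k
      rcases le_or_gt k K with h | h
      · have h1 : s k ≤ C :=
          le_trans (Finset.le_sup' s (Finset.mem_range.2 (by omega))) le_sup_left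
        have h2 : (0:ℝ) ≤ (m + ε) * (k:ℝ) := by positivity
        linarith
      · have hkpos : 0 < k := by omega
        have hk0 : (0:ℝ) < k := by exact_mod_cast hkpos
        have h4 := hK k (le_of_lt h)
        have h5 : s k < (m + ε) * k := by
          rw [div_lt_iff₀ hk0] at h4; linarith
        linarith
    have htend : Tendsto (fun N : ℕ => C / N) atTop (nhds 0) :=
      tendsto_const_div_atTop_nhds_zero_nat C
    have h2 : ∀ᶠ N : ℕ in atTop, C / N < ε :=
      htend.eventually (eventually_lt_nhds hεpos)
    filter_upwards [h2, eventually_ge_atTop 1] with N h2 h3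
    have hN : (0:ℝ) < N := by exact_mod_cast h3
    have hsup : ((Finset.range (N+1)).sup' (by simp) s) ≤ (m + ε) * N + C := by
      apply Finset.sup'_le
      intro k hk
      have hkN : (k:ℝ) ≤ N := by
        have := Finset.mem_range.1 hk; exact_mod_cast Nat.lt_succ_iff.1 this
      calc s k ≤ (m + ε) * k + C := hbound k
        _ ≤ (m + ε) * N + C := by gcongr
    calc ((Finset.range (N+1)).sup' (by simp) s) / N ≤ ((m + ε) * N + C)/N := by gcongr
      _ = (m + ε) + C / N := by field_simp
      _ < (m + ε) + ε := by linarith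
      _ = b := by rw [hε]; ring

/-- Reversal of a finite tuple, as an equivalence. -/
def revArrow (n : ℕ) : (Fin n → ℤ) ≃ (Fin n → ℤ) where
  toFun v := fun i => v i.rev
  invFun v := fun i => v i.rev
  left_inv v := funext fun i => by simp [Fin.rev_rev]
  right_inv v := funext fun i => by simp [Fin.rev_rev]

lemma dual_aux {Ω : Type*} [MeasurableSpace Ω] (μ : Measure Ω) [IsProbabilityMeasure μ]
    (X : ℕ → Ω → ℤ) (hmeas : ∀ i, Measurable (X i))
    (hindep : iIndepFun X μ)
    (hident : ∀ i, IdentDistrib (X i) (X 0) μ μ) (n : ℕ) :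
    μ {ω | ∀ k, k < n → 0 < ∑ i ∈ Finset.Ico k n, X i ω}
      = μ {ω | ∀ j, 1 ≤ j → j ≤ n → 0 < ∑ i ∈ Finset.range j, X i ω} := by
  classical
  -- measure of a cylinder set
  have cyl : ∀ v : Fin n → ℤ, μ (⋂ i : Fin n, X i.1 ⁻¹' {v i})
      = ∏ i : Fin n, μ (X 0 ⁻¹' {v i}) := by
    intro v
    set w : ℕ → Set ℤ := fun i => if h : i < n then {v ⟨i, h⟩} else Set.univ with hw
    have hset : (⋂ i : Fin n, X i.1 ⁻¹' {v i}) = ⋂ i ∈ Finset.range n, X i ⁻¹' w i := by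
      ext ω
      simp only [Set.mem_iInter, Set.mem_preimage, Finset.mem_range, hw]
      constructor
      · intro h i hi
        rw [dif_pos hi]; exact h ⟨i, hi⟩
      · intro h i
        have := h i.1 i.2
        rwa [dif_pos i.2] at this
    rw [hset, hindep.measure_inter_preimage_eq_mul (Finset.range n)
      (fun i _ => (by trivial : MeasurableSet (w i)))]
    rw [← Fin.prod_univ_eq_prod_range (fun i => μ (X i ⁻¹' w i)) n]
    refine Finset.prod_congr rfl fun i _ => ?_
    have hw' : w i.1 = {v i} := by
      rw [hw]; simp only [dif_pos i.2, Fin.eta]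
    rw [hw']
    exact (hident i.1).measure_mem_eq (by trivial)
  -- measure of a vector event
  have key : ∀ T : Set (Fin n → ℤ),
      μ ((fun ω => fun i : Fin n => X i.1 ω) ⁻¹' T)
        = ∑' v : T, ∏ i : Fin n, μ (X 0 ⁻¹' {(v : Fin n → ℤ) i}) := by
    intro T
    have hdec : (fun ω => fun i : Fin n => X i.1 ω) ⁻¹' T
        = ⋃ v : T, ⋂ i : Fin n, X i.1 ⁻¹' {(v : Fin n → ℤ) i} := by
      ext ω
      simp only [Set.mem_preimage, Set.mem_iUnion, Set.mem_iInter, Set.mem_singleton_iff]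
      constructor
      · intro h
        exact ⟨⟨_, h⟩, fun i => rfl⟩
      · rintro ⟨v, hv⟩
        have hvv : (fun i : Fin n => X i.1 ω) = (v : Fin n → ℤ) := funext hv
        rw [hvv]; exact v.2
    rw [hdec, measure_iUnion]
    · exact tsum_congr fun v => cyl v
    · intro a b hab
      simp only [Function.onFun, Set.disjoint_left]
      intro ω ha hb
      apply hab
      apply Subtype.ext
      funext i
      have h1 := Set.mem_iInter.1 ha i
      have h2 := Set.mem_iInter.1 hb i
      simp only [Set.mem_preimage, Set.mem_singleton_iff] at h1 h2
      rw [← h1, ← h2]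
    · intro v
      exact MeasurableSet.iInter fun i => (hmeas i.1) (by trivial)
  -- sum identities
  have hIcoSum : ∀ (f : ℕ → ℤ) (k : ℕ),
      ∑ i : Fin n, (if k ≤ i.1 then f i.1 else 0) = ∑ i ∈ Finset.Ico k n, f i := by
    intro f k
    rw [Fin.sum_univ_eq_sum_range (fun i => if k ≤ i then f i else 0) n, ← Finset.sum_filter]
    congr 1
    ext x
    simp only [Finset.mem_filter, Finset.mem_range, Finset.mem_Ico]
    omega
  have hRangeSum : ∀ (f : ℕ → ℤ) (j : ℕ), j ≤ n →
      ∑ i : Fin n, (if i.1 < j then f i.1 else 0) = ∑ i ∈ Finset.range j, f i := by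
    intro f j hj
    rw [Fin.sum_univ_eq_sum_range (fun i => if i < j then f i else 0) n, ← Finset.sum_filter]
    congr 1
    ext x
    simp only [Finset.mem_filter, Finset.mem_range]
    omega
  set TA : Set (Fin n → ℤ) :=
    {v | ∀ k, k < n → 0 < ∑ i : Fin n, (if k ≤ i.1 then v i else 0)} with hTA
  set TB : Set (Fin n → ℤ) :=
    {v | ∀ j, 1 ≤ j → j ≤ n → 0 < ∑ i : Fin n, (if i.1 < j then v i else 0)} with hTB
  have hAset : {ω | ∀ k, k < n → 0 < ∑ i ∈ Finset.Ico k n, X i ω}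
      = (fun ω => fun i : Fin n => X i.1 ω) ⁻¹' TA := by
    ext ω
    simp only [Set.mem_setOf_eq, Set.mem_preimage, hTA]
    constructor
    · intro h k hk
      rw [hIcoSum (fun i => X i ω) k]; exact h k hk
    · intro h k hk
      rw [← hIcoSum (fun i => X i ω) k]; exact h k hk
  have hBset : {ω | ∀ j, 1 ≤ j → j ≤ n → 0 < ∑ i ∈ Finset.range j, X i ω}
      = (fun ω => fun i : Fin n => X i.1 ω) ⁻¹' TB := by
    ext ω
    simp only [Set.mem_setOf_eq, Set.mem_preimage, hTB]
    constructor
    · intro h j h1 h2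
      rw [hRangeSum (fun i => X i ω) j h2]; exact h j h1 h2
    · intro h j h1 h2
      rw [← hRangeSum (fun i => X i ω) j h2]; exact h j h1 h2
  -- reversal membership
  have hRevSum : ∀ (v : Fin n → ℤ) (k : ℕ), k < n →
      ∑ i : Fin n, (if k ≤ i.1 then (revArrow n v) i else 0)
        = ∑ i : Fin n, (if i.1 < n - k then v i else 0) := by
    intro v k hk
    have h1 : ∑ i : Fin n, (if k ≤ i.1 then (revArrow n v) i else 0)
        = ∑ i : Fin n, (if k ≤ (Fin.rev i).1 then v i else 0) := by
      refine Fintype.sum_equiv Fin.revPerm _ _ fun i => ?_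
      simp only [revArrow, Equiv.coe_fn_mk, Fin.revPerm_apply, Fin.rev_rev]
    rw [h1]
    refine Finset.sum_congr rfl fun i _ => ?_
    refine if_congr ?_ rfl rfl
    have h2 := i.2
    rw [Fin.val_rev]
    omega
  have hMem : ∀ v : Fin n → ℤ, v ∈ TB ↔ (revArrow n v) ∈ TA := by
    intro v
    simp only [hTA, hTB, Set.mem_setOf_eq]
    constructor
    · intro h k hk
      rw [hRevSum v k hk]
      have := h (n - k) (by omega) (by omega)
      exact this
    · intro h j h1 h2
      have h3 := h (n - j) (by omega)
      rw [hRevSum v (n - j) (by omega)] at h3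
      have h4 : n - (n - j) = j := by omega
      rwa [h4] at h3
  rw [hAset, hBset, key TA, key TB]
  rw [← (Equiv.subtypeEquiv (revArrow n) hMem).tsum_eq
    (fun a : TA => ∏ i : Fin n, μ (X 0 ⁻¹' {(a : Fin n → ℤ) i}))]
  refine tsum_congr fun b => ?_
  have hcoe : ((Equiv.subtypeEquiv (revArrow n) hMem) b : Fin n → ℤ) = revArrow n (b : Fin n → ℤ) := rfl
  rw [hcoe]
  refine Fintype.prod_equiv Fin.revPerm _ _ fun i => ?_
  simp only [revArrow, Equiv.coe_fn_mk, Fin.revPerm_apply, Fin.rev_rev]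

/-- Ballot-type identity: for a skip-free ascending random walk `S_n = Σ_{i<n} X_i`
with i.i.d. increments, `P(X_1 = 1) > 0`, no jumps `≥ 2`, integrable increments and
positive drift, the probability of never hitting `(-∞,0]` after time `0` equals the
drift `E[X_1]`. -/
theorem skip_free_ascending_ballot
    {Ω : Type*} [MeasurableSpace Ω] (μ : Measure Ω) [IsProbabilityMeasure μ]
    (X : ℕ → Ω → ℤ) (hmeas : ∀ i, Measurable (X i))
    (hindep : iIndepFun X μ)
    (hident : ∀ i, IdentDistrib (X i) (X 0) μ μ)
    (hpos : 0 < μ {ω | X 0 ω = 1})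
    (hskip : ∀ᵐ ω ∂μ, X 0 ω ≤ 1)
    (hint : Integrable (fun ω => (X 0 ω : ℝ)) μ)
    (hdrift : 0 < ∫ ω, (X 0 ω : ℝ) ∂μ) :
    (μ {ω | ∀ n : ℕ, 1 ≤ n → 0 < ∑ i ∈ Finset.range n, X i ω}).toReal
      = ∫ ω, (X 0 ω : ℝ) ∂μ := by
  classical
  set m : ℝ := ∫ ω, (X 0 ω : ℝ) ∂μ with hm
  have castMeas : Measurable (fun z : ℤ => (z : ℝ)) := measurable_from_top
  have hXr_ident : ∀ i, IdentDistrib (fun ω => (X i ω : ℝ)) (fun ω => (X 0 ω : ℝ)) μ μ :=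
    fun i => (hident i).comp castMeas
  have hXr_int : ∀ i, Integrable (fun ω => (X i ω : ℝ)) μ :=
    fun i => (hXr_ident i).integrable_iff.2 hint
  -- partial sums
  set S : ℕ → Ω → ℤ := fun n ω => ∑ i ∈ Finset.range n, X i ω with hS
  have hSmeas : ∀ nn, Measurable (S nn) := fun nn =>
    Finset.measurable_sum _ fun i _ => hmeas i
  have hScast : ∀ (nn : ℕ) (ω : Ω), (S nn ω : ℝ) = ∑ i ∈ Finset.range nn, (X i ω : ℝ) := by
    intro nn ω; simp only [hS]; push_cast; rfl
  have hSr_int : ∀ N, Integrable (fun ω => (S N ω : ℝ)) μ := by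
    intro N
    have : (fun ω => (S N ω : ℝ)) = fun ω => ∑ i ∈ Finset.range N, (X i ω : ℝ) := by
      funext ω; exact hScast N ω
    rw [this]
    exact integrable_finset_sum _ fun i _ => hXr_int i
  have hSr_integral : ∀ N : ℕ, ∫ ω, (S N ω : ℝ) ∂μ = N * m := by
    intro N
    have h1 : (fun ω => (S N ω : ℝ)) = fun ω => ∑ i ∈ Finset.range N, (X i ω : ℝ) := by
      funext ω; exact hScast N ω
    rw [h1, integral_finset_sum _ fun i _ => hXr_int i]
    rw [Finset.sum_congr rfl fun i _ => (hXr_ident i).integral_eq, Finset.sum_const,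
      Finset.card_range, nsmul_eq_mul]
  -- events
  set Bset : ℕ → Set Ω := fun nn => {ω | ∀ j, 1 ≤ j → j ≤ nn → 0 < ∑ i ∈ Finset.range j, X i ω}
    with hBsetdef
  set A : ℕ → Set Ω := fun nn => {ω | ∀ k, k < nn → 0 < ∑ i ∈ Finset.Ico k nn, X i ω} with hAdef
  have hBmeas : ∀ nn, MeasurableSet (Bset nn) := by
    intro nn
    have h1 : Bset nn = ⋂ j, ⋂ (_ : 1 ≤ j), ⋂ (_ : j ≤ nn), (S j) ⁻¹' {z : ℤ | 0 < z} := by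
      ext ω; simp [hBsetdef, Set.mem_iInter, hS]
    rw [h1]
    exact MeasurableSet.iInter fun j => MeasurableSet.iInter fun _ =>
      MeasurableSet.iInter fun _ => (hSmeas j) (by trivial)
  have hAmeas : ∀ nn, MeasurableSet (A nn) := by
    intro nn
    have h1 : A nn = ⋂ k, ⋂ (_ : k < nn),
        (fun ω => ∑ i ∈ Finset.Ico k nn, X i ω) ⁻¹' {z : ℤ | 0 < z} := by
      ext ω; simp [hAdef, Set.mem_iInter]
    rw [h1]
    exact MeasurableSet.iInter fun k => MeasurableSet.iInter fun _ =>
      (Finset.measurable_sum _ fun i _ => hmeas i) (by trivial)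
  have hdual : ∀ nn, μ (A nn) = μ (Bset nn) := fun nn =>
    dual_aux μ X hmeas hindep hident nn
  set B : Set Ω := {ω | ∀ n : ℕ, 1 ≤ n → 0 < ∑ i ∈ Finset.range n, X i ω} with hBdef
  have hBeq : B = ⋂ nn, Bset nn := by
    ext ω
    simp only [hBdef, hBsetdef, Set.mem_setOf_eq, Set.mem_iInter]
    constructor
    · intro h nn j h1 _; exact h j h1
    · intro h j h1; exact h j j h1 le_rfl
  have hqm : Tendsto (fun nn => μ (Bset nn)) atTop (nhds (μ B)) := by
    rw [hBeq]
    exact tendsto_measure_iInter_atTop (fun nn => (hBmeas nn).nullMeasurableSet)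
      (fun a b hab ω hω j h1 h2 => hω j h1 (le_trans h2 hab)) ⟨0, measure_ne_top μ _⟩
  set q : ℝ := (μ B).toReal with hq
  set qr : ℕ → ℝ := fun nn => (μ (Bset nn)).toReal with hqrdef
  have hqrt : Tendsto qr atTop (nhds q) :=
    (ENNReal.tendsto_toReal (measure_ne_top μ B)).comp hqm
  -- a.e. the steps are ≤ 1
  have hstepae : ∀ᵐ ω ∂μ, ∀ i, X i ω ≤ 1 := by
    rw [ae_all_iff]
    intro i
    exact (hident i).symm.ae_snd (p := fun z => z ≤ 1) (by trivial) hskip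
  -- record-counting process
  set R : ℕ → Ω → ℝ :=
    fun N ω => ∑ nn ∈ Finset.Icc 1 N, (A nn).indicator (1 : Ω → ℝ) ω with hRdef
  have hRmeas : ∀ N, Measurable (R N) := fun N =>
    Finset.measurable_sum _ fun nn _ => measurable_one.indicator (hAmeas nn)
  have hIndInt : ∀ nn, Integrable ((A nn).indicator (1 : Ω → ℝ)) μ := fun nn =>
    (integrable_const (1:ℝ)).indicator (hAmeas nn)
  have hRint : ∀ N, Integrable (R N) μ := fun N => integrable_finset_sum _ fun nn _ =>
    hIndInt nn
  have hRintegral : ∀ N, ∫ ω, R N ω ∂μ = ∑ nn ∈ Finset.Icc 1 N, qr nn := by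
    intro N
    simp only [hRdef]
    rw [integral_finset_sum _ fun nn _ => hIndInt nn]
    refine Finset.sum_congr rfl fun nn _ => ?_
    rw [integral_indicator_one (hAmeas nn), hqrdef, measureReal_def, hdual nn]
  -- a.e., R N = running maximum of partial sums
  have hRsup : ∀ᵐ ω ∂μ, ∀ N, R N ω
      = (Finset.range (N+1)).sup' (by simp) (fun k => (S k ω : ℝ)) := by
    filter_upwards [hstepae] with ω hω
    intro N
    have hmemA : ∀ nn, ω ∈ A nn ↔ ∀ k, k < nn → S k ω < S nn ω := by
      intro nn
      simp only [hAdef, Set.mem_setOf_eq]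
      have h3 : ∀ k, k < nn → ∑ i ∈ Finset.Ico k nn, X i ω = S nn ω - S k ω := by
        intro k hk
        simp only [hS]
        exact Finset.sum_Ico_eq_sub _ (le_of_lt hk)
      constructor
      · intro h k hk
        have h2 := h k hk
        rw [h3 k hk] at h2
        omega
      · intro h k hk
        rw [h3 k hk]
        have := h k hk
        omega
    have h1 : R N ω
        = (((Finset.Icc 1 N).filter (fun nn => ∀ k, k < nn → S k ω < S nn ω)).card : ℝ) := by
      simp only [hRdef]
      rw [Finset.card_filter]
      push_cast
      refine Finset.sum_congr rfl fun nn _ => ?_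
      by_cases h : ω ∈ A nn
      · rw [Set.indicator_of_mem h, if_pos ((hmemA nn).1 h)]; rfl
      · rw [Set.indicator_of_notMem h, if_neg (fun hc => h ((hmemA nn).2 hc))]
    have h2 := records_card_eq_sup (fun k => S k ω) (by simp [hS])
      (fun k => by
        show S (k+1) ω ≤ S k ω + 1
        have hstep1 : S (k+1) ω = S k ω + X k ω := by
          simp only [hS]; exact Finset.sum_range_succ _ _
        have := hω k
        omega) N
    have h4 : (((Finset.range (N+1)).sup' (by simp) (fun k => S k ω) : ℤ) : ℝ)
        = (Finset.range (N+1)).sup' (by simp) (fun k => (S k ω : ℝ)) :=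
      Finset.comp_sup'_eq_sup'_comp _ (fun z : ℤ => (z : ℝ)) (fun x y => Int.cast_max)
    rw [h1, ← h4, ← h2]
    push_cast
    rfl
  -- strong law of large numbers for the increments
  have hslln : ∀ᵐ ω ∂μ, Tendsto (fun nn : ℕ => (S nn ω : ℝ) / nn) atTop (nhds m) := by
    have h0 := strong_law_ae_real (fun i ω => (X i ω : ℝ)) hint
      (fun i j hij => (hindep.indepFun hij).comp castMeas castMeas)
      (fun i => hXr_ident i)
    filter_upwards [h0] with ω hω
    refine hω.congr fun nn => ?_
    rw [hScast nn ω]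
  have hmaxlim : ∀ᵐ ω ∂μ, Tendsto (fun N : ℕ => R N ω / N) atTop (nhds m) := by
    filter_upwards [hslln, hRsup] with ω h1 h2
    have h3 := tendsto_sup_div hdrift h1
    refine h3.congr fun N => ?_
    rw [h2 N]
  -- positive parts
  set Z : ℕ → Ω → ℝ := fun i ω => max ((X i ω : ℝ)) 0 with hZdef
  have hZmeas : ∀ i, Measurable (Z i) := fun i =>
    (measurable_from_top (f := fun z : ℤ => max (z:ℝ) 0)).comp (hmeas i)
  have hZident : ∀ i, IdentDistrib (Z i) (Z 0) μ μ :=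
    fun i => (hident i).comp (measurable_from_top (f := fun z : ℤ => max (z:ℝ) 0))
  have hZ0int : Integrable (Z 0) μ := hint.pos_part
  have hZint : ∀ i, Integrable (Z i) μ := fun i => (hZident i).integrable_iff.2 hZ0int
  set mp : ℝ := ∫ ω, Z 0 ω ∂μ with hmpdef
  set Y : ℕ → Ω → ℝ := fun N ω => ∑ i ∈ Finset.range N, Z i ω with hYdef
  have hYint : ∀ N, Integrable (Y N) μ := fun N => integrable_finset_sum _ fun i _ => hZint i
  have hYintegral : ∀ N : ℕ, ∫ ω, Y N ω ∂μ = N * mp := by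
    intro N
    simp only [hYdef]
    rw [integral_finset_sum _ fun i _ => hZint i]
    rw [Finset.sum_congr rfl fun i _ => (hZident i).integral_eq, Finset.sum_const,
      Finset.card_range, nsmul_eq_mul]
  -- comparisons
  have hSleR : ∀ᵐ ω ∂μ, ∀ N, (S N ω : ℝ) ≤ R N ω := by
    filter_upwards [hRsup] with ω h2
    intro N
    rw [h2 N]
    exact Finset.le_sup' (fun k => ((S k ω : ℤ) : ℝ)) (Finset.mem_range.2 (Nat.lt_succ_self N))
  have hRleY : ∀ᵐ ω ∂μ, ∀ N, R N ω ≤ Y N ω := by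
    filter_upwards [hRsup] with ω h2
    intro N
    rw [h2 N]
    apply Finset.sup'_le
    intro k hk
    have hkN : k ≤ N := by
      have := Finset.mem_range.1 hk; omega
    calc (S k ω : ℝ) = ∑ i ∈ Finset.range k, (X i ω : ℝ) := hScast k ω
      _ ≤ ∑ i ∈ Finset.range k, Z i ω :=
          Finset.sum_le_sum fun i _ => le_max_left _ _
      _ ≤ Y N ω := Finset.sum_le_sum_of_subset_of_nonneg
          (Finset.range_subset_range.2 hkN) (fun i _ _ => le_max_right _ _)
  -- the normalized integral of R tends to q
  have hIRt : Tendsto (fun N : ℕ => (∫ ω, R N ω ∂μ) / N) atTop (nhds q) := by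
    have hsum : ∀ N, ∫ ω, R N ω ∂μ = ∑ i ∈ Finset.range N, qr (1 + i) := by
      intro N
      rw [hRintegral N]
      have h1 : Finset.Icc 1 N = Finset.Ico 1 (N+1) := by rw [Finset.Ico_add_one_right_eq_Icc]
      rw [h1, Finset.sum_Ico_eq_sum_range]
      simp
    have hcesaro : Tendsto (fun i : ℕ => qr (1 + i)) atTop (nhds q) := by
      have := hqrt.comp (tendsto_add_atTop_nat 1)
      refine this.congr fun i => ?_
      simp [add_comm]
    have h2 := hcesaro.cesaro
    refine h2.congr fun N => ?_
    rw [hsum N, inv_mul_eq_div]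
  -- lower bound : m ≤ q
  have hlow : m ≤ q := by
    refine ge_of_tendsto hIRt ?_
    filter_upwards [eventually_ge_atTop 1] with N hN
    have hint1 : ∫ ω, (S N ω : ℝ) ∂μ ≤ ∫ ω, R N ω ∂μ :=
      integral_mono_ae (hSr_int N) (hRint N)
        (by filter_upwards [hSleR] with ω h; exact h N)
    rw [hSr_integral N] at hint1
    have hNpos : (0:ℝ) < N := by exact_mod_cast hN
    rw [le_div_iff₀ hNpos]
    linarith
  -- q ≤ mp
  have hup1 : q ≤ mp := by
    refine le_of_tendsto hIRt ?_
    filter_upwards [eventually_ge_atTop 1] with N hN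
    have hint1 : ∫ ω, R N ω ∂μ ≤ ∫ ω, Y N ω ∂μ :=
      integral_mono_ae (hRint N) (hYint N)
        (by filter_upwards [hRleY] with ω h; exact h N)
    rw [hYintegral N] at hint1
    have hNpos : (0:ℝ) < N := by exact_mod_cast hN
    rw [div_le_iff₀ hNpos]
    linarith
  -- Fatou argument : q ≤ m
  set g : ℕ → Ω → ℝ := fun N ω => (Y N ω - R N ω) / N with hgdef
  have hgmeas : ∀ N, Measurable (g N) := fun N =>
    (((Finset.measurable_sum _ fun i _ => hZmeas i)).sub (hRmeas N)).div_const _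
  have hgint : ∀ N, Integrable (g N) μ := fun N => ((hYint N).sub (hRint N)).div_const _
  have hgnonneg : ∀ N, 0 ≤ᵐ[μ] g N := by
    intro N
    filter_upwards [hRleY] with ω h
    have := h N
    simp only [hgdef, Pi.zero_apply]
    have hNn : (0:ℝ) ≤ N := Nat.cast_nonneg N
    exact div_nonneg (by linarith) hNn
  have hgtends : ∀ᵐ ω ∂μ, Tendsto (fun N => g N ω) atTop (nhds (mp - m)) := by
    have hsllnZ : ∀ᵐ ω ∂μ, Tendsto (fun N : ℕ => Y N ω / N) atTop (nhds mp) := by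
      have h0 := strong_law_ae_real Z hZ0int
        (fun i j hij => (hindep.indepFun hij).comp
          (measurable_from_top (f := fun z : ℤ => max (z:ℝ) 0))
          (measurable_from_top (f := fun z : ℤ => max (z:ℝ) 0)))
        (fun i => hZident i)
      filter_upwards [h0] with ω hω
      exact hω
    filter_upwards [hsllnZ, hmaxlim] with ω h1 h2
    have h3 := h1.sub h2
    refine h3.congr fun N => ?_
    simp only [hgdef]
    rw [div_sub_div_same]
  have hgintegral : Tendsto (fun N => ∫ ω, g N ω ∂μ) atTop (nhds (mp - q)) := by
    have h1 : ∀ᶠ N : ℕ in atTop, mp - (∫ ω, R N ω ∂μ) / N = ∫ ω, g N ω ∂μ := by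
      filter_upwards [eventually_ge_atTop 1] with N hN
      have hNpos : (0:ℝ) < N := by exact_mod_cast hN
      have h2 : ∫ ω, g N ω ∂μ = (∫ ω, (Y N ω - R N ω) ∂μ) / N := by
        simp only [hgdef]
        exact integral_div _ _
      rw [h2, integral_sub (hYint N) (hRint N), hYintegral N]
      field_simp
    exact Tendsto.congr' h1 (tendsto_const_nhds.sub hIRt)
  have hfatou : ENNReal.ofReal (mp - m) ≤ ENNReal.ofReal (mp - q) := by
    have hlim1 : ∀ᵐ ω ∂μ, Filter.liminf (fun N => ENNReal.ofReal (g N ω)) atTop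
        = ENNReal.ofReal (mp - m) := by
      filter_upwards [hgtends] with ω h
      exact ((ENNReal.continuous_ofReal.tendsto _).comp h).liminf_eq
    have h1 : ∫⁻ ω, Filter.liminf (fun N => ENNReal.ofReal (g N ω)) atTop ∂μ
        = ENNReal.ofReal (mp - m) := by
      rw [lintegral_congr_ae hlim1, lintegral_const, measure_univ, mul_one]
    have h2 := lintegral_liminf_le (μ := μ) (f := fun N ω => ENNReal.ofReal (g N ω)) (u := atTop)
      (fun N => (hgmeas N).ennreal_ofReal)
    rw [h1] at h2
    have h3 : ∀ N, ∫⁻ ω, ENNReal.ofReal (g N ω) ∂μ = ENNReal.ofReal (∫ ω, g N ω ∂μ) :=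
      fun N => (ofReal_integral_eq_lintegral_ofReal (hgint N) (hgnonneg N)).symm
    have h4 : Filter.liminf (fun N => ∫⁻ ω, ENNReal.ofReal (g N ω) ∂μ) atTop
        = ENNReal.ofReal (mp - q) := by
      have h5 : Tendsto (fun N => ∫⁻ ω, ENNReal.ofReal (g N ω) ∂μ) atTop
          (nhds (ENNReal.ofReal (mp - q))) := by
        have := (ENNReal.continuous_ofReal.tendsto _).comp hgintegral
        refine this.congr fun N => ?_
        rw [Function.comp_apply, ← h3 N]
      exact h5.liminf_eq
    rw [h4] at h2
    exact h2
  have hupper : q ≤ m := by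
    have hd : 0 ≤ mp - q := by linarith
    have h6 := (ENNReal.ofReal_le_ofReal_iff hd).1 hfatou
    linarith
  exact le_antisymm hupper hlow
end
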